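/- Let λ > 0, L > 0, γ > 0, λ_x > 0, and let x, x_1, …, x_n ∈ ℝ^d with ‖x‖₂ ≤ L and ‖x_τ‖₂ ≤ L for all τ, and θ, θ_1, …, θ_n ∈ ℝ^d with ‖θ_τ − θ‖₂ ≤ γ for all τ. Define M̄ = λ·I + Σ_{τ=1}^{n} x_τ x_τᵀ and assume λ_min(M̄) ≥ λ + n·λ_x/2. Then: | xᵀ M̄^{−1} Σ_{τ=1}^{n} x_τ x_τᵀ (θ_τ − θ) | ≤ 2 L³ γ / λ_x. -/

import Mathlib

open Matrix

/-- The Euclidean (ℓ²) norm of a vector in `ℝ^d`. -/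
noncomputable def l2norm {d : ℕ} (v : Fin d → ℝ) : ℝ :=
  Real.sqrt (∑ i, v i ^ 2)

/-- The minimum eigenvalue of a real matrix (defined via its eigenvalues when
the matrix is Hermitian, i.e. symmetric; junk value `0` otherwise). -/
noncomputable def minEig {d : ℕ} (M : Matrix (Fin d) (Fin d) ℝ) : ℝ :=
  if h : M.IsHermitian then ⨅ i, h.eigenvalues i else 0

namespace Stmt12Aux

/-- Identify plain vectors with Euclidean space. -/
noncomputable def toE {d : ℕ} : (Fin d → ℝ) ≃ₗ[ℝ] EuclideanSpace ℝ (Fin d) :=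
  (WithLp.linearEquiv 2 ℝ (Fin d → ℝ)).symm

lemma toE_apply {d : ℕ} (v : Fin d → ℝ) (i : Fin d) : toE v i = v i := rfl

lemma l2norm_eq {d : ℕ} (v : Fin d → ℝ) : l2norm v = ‖toE v‖ := by
  rw [EuclideanSpace.norm_eq, l2norm]
  congr 1
  refine Finset.sum_congr rfl fun i _ => ?_
  rw [Real.norm_eq_abs, sq_abs, toE_apply]

lemma l2norm_nonneg {d : ℕ} (v : Fin d → ℝ) : 0 ≤ l2norm v := Real.sqrt_nonneg _

lemma abs_dot_le {d : ℕ} (a b : Fin d → ℝ) : |a ⬝ᵥ b| ≤ l2norm a * l2norm b := by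
  rw [l2norm_eq, l2norm_eq]
  have h := abs_real_inner_le_norm (toE a) (toE b)
  have h2 : (inner ℝ (toE a) (toE b) : ℝ) = a ⬝ᵥ b := by
    simp [PiLp.inner_apply, dotProduct, RCLike.inner_apply, toE_apply, mul_comm]
  rwa [h2] at h

lemma dot_self_eq_sq {d : ℕ} (v : Fin d → ℝ) : v ⬝ᵥ v = l2norm v ^ 2 := by
  rw [l2norm, Real.sq_sqrt (by positivity)]
  simp [dotProduct, sq]

lemma posSemidef_sub_smul {d : ℕ} (A : Matrix (Fin d) (Fin d) ℝ) (hA : A.IsHermitian)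
    (μ : ℝ) (h : ∀ i, μ ≤ hA.eigenvalues i) : (A - μ • 1).PosSemidef := by
  have hU := hA.spectral_theorem
  simp only [Unitary.conjStarAlgAut_apply, Unitary.coe_star] at hU
  set U : Matrix (Fin d) (Fin d) ℝ :=
    (Matrix.IsHermitian.eigenvectorUnitary hA : Matrix (Fin d) (Fin d) ℝ) with hUdef
  have hUU : U * star U = 1 :=
    (Matrix.mem_unitaryGroup_iff).mp (Matrix.IsHermitian.eigenvectorUnitary hA).2
  have key : A - μ • 1 = U * diagonal (fun i => hA.eigenvalues i - μ) * star U := by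
    have hdiag : diagonal (fun i => hA.eigenvalues i - μ)
        = diagonal (RCLike.ofReal ∘ hA.eigenvalues) - μ • (1 : Matrix (Fin d) (Fin d) ℝ) := by
      ext i j
      rcases eq_or_ne i j with rfl | hij
      · simp
      · simp [Matrix.diagonal_apply_ne _ hij, Matrix.one_apply_ne hij]
    rw [hdiag, Matrix.mul_sub, Matrix.sub_mul, ← hU]
    congr 1
    rw [Matrix.mul_smul, Matrix.smul_mul, mul_one, hUU]
  rw [key]
  exact (Matrix.posSemidef_diagonal_iff.mpr fun i => sub_nonneg.mpr (h i)).mul_mul_conjTranspose_same U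

end Stmt12Aux

open Stmt12Aux

/-- Misclustering bias bound: with `‖x‖₂ ≤ L`, `‖x τ‖₂ ≤ L`,
`‖θs τ - θ‖₂ ≤ γ`, `M̄ = λ • I + ∑ τ, x τ x τᵀ` and
`λ_min M̄ ≥ λ + n λ_x / 2`, one has
`|xᵀ M̄⁻¹ ∑ τ, x τ x τᵀ (θs τ - θ)| ≤ 2 L³ γ / λ_x`. -/
theorem stmt_12 (d n : ℕ) (lam L γ lamx : ℝ)
    (hlam : 0 < lam) (hL : 0 < L) (hγ : 0 < γ) (hlamx : 0 < lamx)
    (x : Fin d → ℝ) (hx : l2norm x ≤ L)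
    (xs : Fin n → Fin d → ℝ) (hxs : ∀ τ, l2norm (xs τ) ≤ L)
    (θ : Fin d → ℝ) (θs : Fin n → Fin d → ℝ)
    (hθs : ∀ τ, l2norm (θs τ - θ) ≤ γ)
    (Mbar : Matrix (Fin d) (Fin d) ℝ)
    (hM : Mbar = lam • (1 : Matrix (Fin d) (Fin d) ℝ) + ∑ τ, vecMulVec (xs τ) (xs τ))
    (hmin : lam + n * lamx / 2 ≤ minEig Mbar) :
    |x ⬝ᵥ Mbar⁻¹ *ᵥ (∑ τ, vecMulVec (xs τ) (xs τ) *ᵥ (θs τ - θ))| ≤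
      2 * L ^ 3 * γ / lamx := by
  rcases Nat.eq_zero_or_pos n with hn | hn
  · subst hn
    simp only [Finset.univ_eq_empty, Finset.sum_empty, mulVec_zero, dotProduct_zero, abs_zero]
    positivity
  set μ : ℝ := lam + n * lamx / 2 with hμdef
  have hμpos : 0 < μ := by positivity
  set v : Fin d → ℝ := ∑ τ, vecMulVec (xs τ) (xs τ) *ᵥ (θs τ - θ) with hvdef
  -- Mbar is Hermitian
  have hHerm : Mbar.IsHermitian := by
    rw [hM]
    show _ᴴ = _
    ext i j
    simp [Matrix.conjTranspose_apply, Matrix.add_apply, Matrix.smul_apply, Matrix.one_apply,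
      Matrix.sum_apply, Matrix.vecMulVec_apply, eq_comm, mul_comm]
  -- eigenvalue bound
  have heig : ∀ i, μ ≤ hHerm.eigenvalues i := by
    intro i
    refine le_trans ?_ (ciInf_le (Set.Finite.bddBelow (Set.finite_range _)) i)
    rwa [minEig, dif_pos hHerm] at hmin
  have hPSD := posSemidef_sub_smul Mbar hHerm μ heig
  -- quadratic lower bound
  have hquad : ∀ u : Fin d → ℝ, μ * (u ⬝ᵥ u) ≤ u ⬝ᵥ Mbar *ᵥ u := by
    intro u
    have h0 := hPSD.dotProduct_mulVec_nonneg u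
    simp only [star_trivial, Matrix.sub_mulVec, dotProduct_sub, Matrix.smul_mulVec,
      Matrix.one_mulVec, dotProduct_smul, smul_eq_mul, sub_nonneg] at h0
    exact h0
  -- Mbar is invertible
  have hPD : Mbar.PosDef := by
    refine Matrix.PosDef.of_dotProduct_mulVec_pos hHerm fun u hu => ?_
    have h1 := hquad u
    have h2 : 0 < u ⬝ᵥ u := by
      rcases lt_or_eq_of_le (dotProduct_self_star_nonneg u) with h | h
      · simpa using h
      · exact absurd (by simpa using h.symm) hu
    calc (0:ℝ) < μ * (u ⬝ᵥ u) := by positivity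
    _ ≤ u ⬝ᵥ Mbar *ᵥ u := h1
    _ = star u ⬝ᵥ Mbar *ᵥ u := by simp
  have hdet : IsUnit Mbar.det := isUnit_iff_ne_zero.mpr hPD.det_pos.ne'
  set u : Fin d → ℝ := Mbar⁻¹ *ᵥ v with hudef
  have huv : Mbar *ᵥ u = v := by
    rw [hudef, Matrix.mulVec_mulVec, Matrix.mul_nonsing_inv _ hdet, Matrix.one_mulVec]
  -- bound on ‖v‖
  have hterm : ∀ τ, vecMulVec (xs τ) (xs τ) *ᵥ (θs τ - θ) = (xs τ ⬝ᵥ (θs τ - θ)) • xs τ := by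
    intro τ
    ext i
    simp [Matrix.mulVec, Matrix.vecMulVec_apply, dotProduct, Finset.mul_sum, mul_comm, mul_assoc,
      mul_left_comm]
  have hvnorm : l2norm v ≤ n * (L ^ 2 * γ) := by
    rw [l2norm_eq, hvdef, map_sum]
    calc ‖∑ τ, toE (vecMulVec (xs τ) (xs τ) *ᵥ (θs τ - θ))‖
        ≤ ∑ τ, ‖toE (vecMulVec (xs τ) (xs τ) *ᵥ (θs τ - θ))‖ := norm_sum_le _ _
      _ ≤ ∑ _τ : Fin n, L ^ 2 * γ := by
          refine Finset.sum_le_sum fun τ _ => ?_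
          rw [hterm τ, _root_.map_smul, norm_smul, ← l2norm_eq, Real.norm_eq_abs]
          have h1 : |xs τ ⬝ᵥ (θs τ - θ)| ≤ L * γ := by
            refine (abs_dot_le _ _).trans ?_
            exact mul_le_mul (hxs τ) (hθs τ) (l2norm_nonneg _) hL.le
          have h2 : l2norm (xs τ) ≤ L := hxs τ
          calc |xs τ ⬝ᵥ (θs τ - θ)| * l2norm (xs τ) ≤ (L * γ) * L :=
                mul_le_mul h1 h2 (l2norm_nonneg _) (by positivity)
            _ = L ^ 2 * γ := by ring
      _ = n * (L ^ 2 * γ) := by simp [Finset.sum_const, mul_comm]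
  -- bound on ‖u‖
  have hunorm : l2norm u ≤ l2norm v / μ := by
    rcases eq_or_lt_of_le (l2norm_nonneg u) with h0 | h0
    · rw [← h0]; exact div_nonneg (l2norm_nonneg v) hμpos.le
    have h1 : μ * l2norm u ^ 2 ≤ l2norm u * l2norm v := by
      calc μ * l2norm u ^ 2 = μ * (u ⬝ᵥ u) := by rw [dot_self_eq_sq]
        _ ≤ u ⬝ᵥ Mbar *ᵥ u := hquad u
        _ = u ⬝ᵥ v := by rw [huv]
        _ ≤ |u ⬝ᵥ v| := le_abs_self _
        _ ≤ l2norm u * l2norm v := abs_dot_le u v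
    rw [le_div_iff₀ hμpos]
    nlinarith [h1, h0]
  -- final computation
  have hmain : |x ⬝ᵥ u| ≤ L * (n * (L ^ 2 * γ) / μ) := by
    calc |x ⬝ᵥ u| ≤ l2norm x * l2norm u := abs_dot_le x u
      _ ≤ L * (l2norm v / μ) :=
          mul_le_mul hx hunorm (l2norm_nonneg _) hL.le
      _ ≤ L * (n * (L ^ 2 * γ) / μ) := by
          gcongr
  refine hmain.trans ?_
  have hdiv : (n : ℝ) / μ ≤ 2 / lamx := by
    rw [div_le_div_iff₀ hμpos hlamx, hμdef]
    have hn1 : (1:ℝ) ≤ n := by exact_mod_cast hn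
    nlinarith
  calc L * (n * (L ^ 2 * γ) / μ) = (L ^ 3 * γ) * ((n:ℝ) / μ) := by ring
    _ ≤ (L ^ 3 * γ) * (2 / lamx) := by
        refine mul_le_mul_of_nonneg_left hdiv (by positivity)
    _ = 2 * L ^ 3 * γ / lamx := by ring
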